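/- Let T be a densely defined closed EP operator on a complex Hilbert space H and let S be a bounded EP operator on H. Suppose there exist real numbers a, b with 0 < a < 1 and 0 < b < 1 such that ‖Sx‖ ≤ a‖Tx‖ for all x ∈ D(T) and ‖S*z‖ ≤ b‖T*z‖ for all z ∈ D(T*). Then the sum T + S, defined on the domain D(T) by x ↦ Tx + Sx, is a closed operator which is EP: its range is closed and R(T + S) = R((T + S)*). -/

import Mathlib

open LinearPMap

local notation "⟪" x ", " y "⟫" => @inner ℂ _ _ x y

variable {H : Type*} [NormedAddCommGroup H] [InnerProductSpace ℂ H] [CompleteSpace H]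

/-- The range of a densely defined (partial) operator, as a submodule of `H`. -/
noncomputable def pmRange (T : H →ₗ.[ℂ] H) : Submodule ℂ H := LinearMap.range T.toFun

/-- The sum `T + S` of a partial operator `T` and a bounded operator `S`, defined on `D(T)`
by `x ↦ T x + S x`. -/
noncomputable def pmAddL (T : H →ₗ.[ℂ] H) (S : H →L[ℂ] H) : H →ₗ.[ℂ] H where
  domain := T.domain
  toFun := T.toFun + (S : H →ₗ[ℂ] H) ∘ₗ T.domain.subtype

omit [CompleteSpace H] in
theorem pmAddL_apply (T : H →ₗ.[ℂ] H) (S : H →L[ℂ] H) (x : T.domain) :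
    pmAddL T S x = T x + S (x : H) := rfl

omit [CompleteSpace H] in
/-- The graph of `T + S` is closed whenever the graph of `T` is. -/
theorem pmAddL_graph_closed (A : H →ₗ.[ℂ] H) (B : H →L[ℂ] H)
    (h : IsClosed (A.graph : Set (H × H))) :
    IsClosed ((pmAddL A B).graph : Set (H × H)) := by
  have hset : ((pmAddL A B).graph : Set (H × H))
      = (fun p : H × H => (p.1, p.2 - B p.1)) ⁻¹' (A.graph : Set (H × H)) := by
    ext ⟨x, y⟩
    simp only [Set.mem_preimage, SetLike.mem_coe, mem_graph_iff]
    constructor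
    · rintro ⟨u, rfl, rfl⟩
      exact ⟨u, rfl, (sub_eq_of_eq_add (pmAddL_apply A B u)).symm⟩
    · rintro ⟨u, hu, hu2⟩
      refine ⟨u, hu, ?_⟩
      rw [pmAddL_apply, hu2, hu]
      abel
  rw [hset]
  exact h.preimage (continuous_fst.prodMk (continuous_snd.sub (B.continuous.comp continuous_fst)))

/-- Open mapping theorem for a closed operator with closed range: preimages with norm control. -/
theorem pm_exists_preimage (A : H →ₗ.[ℂ] H)
    (hg : IsClosed (A.graph : Set (H × H)))
    (hr : IsClosed ((pmRange A : Submodule ℂ H) : Set H)) :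
    ∃ C > 0, ∀ y ∈ pmRange A, ∃ x : A.domain, A x = y ∧ ‖(x : H)‖ ≤ C * ‖y‖ := by
  haveI : CompleteSpace A.graph := hg.completeSpace_coe
  haveI : CompleteSpace (pmRange A) := hr.completeSpace_coe
  have hrange : ∀ g : A.graph, ((LinearMap.snd ℂ H H).comp A.graph.subtype) g ∈ pmRange A := by
    rintro ⟨⟨x, y⟩, hg'⟩
    rw [mem_graph_iff] at hg'
    obtain ⟨u, -, hu2⟩ := hg'
    exact ⟨u, hu2⟩
  set f₁ : A.graph →ₗ[ℂ] pmRange A :=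
    ((LinearMap.snd ℂ H H).comp A.graph.subtype).codRestrict _ hrange with hf₁
  have hbound : ∀ g : A.graph, ‖f₁ g‖ ≤ 1 * ‖g‖ := by
    rintro ⟨⟨x, y⟩, hg'⟩
    rw [one_mul]; exact norm_snd_le (x, y)
  set f := f₁.mkContinuous 1 hbound with hf
  have hsurj : Function.Surjective f := by
    rintro ⟨y, hy⟩
    obtain ⟨u, hu⟩ := hy
    exact ⟨⟨(u, A u), A.mem_graph u⟩, Subtype.ext hu⟩
  obtain ⟨C, hC0, hC⟩ := f.exists_preimage_norm_le hsurj
  refine ⟨C, hC0, fun y hy => ?_⟩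
  obtain ⟨g, hgy, hgn⟩ := hC ⟨y, hy⟩
  obtain ⟨⟨⟨x1, x2⟩, hx⟩, rfl⟩ : ∃ g' : A.graph, g' = g := ⟨g, rfl⟩
  rw [mem_graph_iff] at hx
  obtain ⟨u, hu1, hu2⟩ := hx
  have hx2 : x2 = y := congrArg Subtype.val hgy
  refine ⟨u, by rw [hu2, hx2], ?_⟩
  calc ‖(u : H)‖ = ‖x1‖ := by rw [hu1]
    _ ≤ ‖(x1, x2)‖ := norm_fst_le (x1, x2)
    _ ≤ C * ‖y‖ := by simpa using hgn

/-- The key perturbation lemma: if `A` is closed with closed range, `‖Bx‖ ≤ a‖Ax‖` on `D(A)`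
with `a < 1`, and `R(B) ⊆ R(A)`, then `R(A + B) = R(A)`. -/
theorem range_pmAddL (A : H →ₗ.[ℂ] H) (B : H →L[ℂ] H) {a : ℝ} (ha0 : 0 ≤ a) (ha1 : a < 1)
    (hg : IsClosed (A.graph : Set (H × H)))
    (hr : IsClosed ((pmRange A : Submodule ℂ H) : Set H))
    (hb : ∀ x : A.domain, ‖B (x : H)‖ ≤ a * ‖A x‖)
    (hBR : LinearMap.range (B : H →ₗ[ℂ] H) ≤ pmRange A) :
    pmRange (pmAddL A B) = pmRange A := by
  apply le_antisymm
  · rintro y ⟨x, rfl⟩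
    have : pmAddL A B x = A x + B (x : H) := rfl
    rw [LinearPMap.toFun_eq_coe, this]
    exact Submodule.add_mem _ ⟨x, rfl⟩ (hBR ⟨(x : H), rfl⟩)
  · intro y hy
    obtain ⟨C, hC0, hC⟩ := pm_exists_preimage A hg hr
    have hstep : ∀ x : A.domain, ∃ x' : A.domain,
        A x' = -(B (x : H)) ∧ ‖(x' : H)‖ ≤ C * ‖-(B (x : H))‖ :=
      fun x => hC _ (Submodule.neg_mem _ (hBR ⟨(x : H), rfl⟩))
    let x : ℕ → A.domain := fun n =>
      Nat.rec (Classical.choose (hC y hy)) (fun _ xp => Classical.choose (hstep xp)) n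
    have hx0 : A (x 0) = y ∧ ‖(x 0).val‖ ≤ C * ‖y‖ := by
      exact Classical.choose_spec (hC y hy)
    have hxs : ∀ n, A (x (n + 1)) = -(B (x n).val) ∧
        ‖(x (n + 1)).val‖ ≤ C * ‖-(B (x n).val)‖ := by
      exact fun n => Classical.choose_spec (hstep (x n))
    have hAx : ∀ n, ‖A (x n)‖ ≤ a ^ n * ‖y‖ := by
      intro n
      induction n with
      | zero => simp [hx0.1]
      | succ n ih =>
        rw [(hxs n).1, norm_neg]
        calc ‖B (x n).val‖ ≤ a * ‖A (x n)‖ := hb _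
          _ ≤ a * (a ^ n * ‖y‖) := by
            exact mul_le_mul_of_nonneg_left ih ha0
          _ = a ^ (n + 1) * ‖y‖ := by ring
    have hxn : ∀ n, ‖(x n).val‖ ≤ C * ‖y‖ * a ^ n := by
      intro n
      cases n with
      | zero => simpa using hx0.2
      | succ n =>
        calc ‖(x (n+1)).val‖ ≤ C * ‖-(B (x n).val)‖ := (hxs n).2
          _ = C * ‖B (x n).val‖ := by rw [norm_neg]
          _ ≤ C * (a * ‖A (x n)‖) := by
            exact mul_le_mul_of_nonneg_left (hb _) hC0.le
          _ ≤ C * (a * (a ^ n * ‖y‖)) := by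
            have := hAx n
            gcongr
          _ = C * ‖y‖ * a ^ (n + 1) := by ring
    have hgeo : Summable fun n : ℕ => a ^ n := summable_geometric_of_lt_one ha0 ha1
    have hsum1 : Summable fun n => (x n).val :=
      Summable.of_norm_bounded (hgeo.mul_left (C * ‖y‖)) hxn
    have hsum2 : Summable fun n => A (x n) := by
      refine Summable.of_norm_bounded (hgeo.mul_left ‖y‖) fun n => ?_
      rw [mul_comm ‖y‖]
      exact hAx n
    set u := ∑' n, (x n).val with hu
    set v := ∑' n, A (x n) with hv
    have hmemgraph : (u, v) ∈ A.graph := by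
      have hpartial : ∀ n : ℕ,
          (∑ i ∈ Finset.range n, (x i).val, ∑ i ∈ Finset.range n, A (x i)) ∈ A.graph := by
        intro n
        have : (∑ i ∈ Finset.range n, (x i).val, ∑ i ∈ Finset.range n, A (x i))
            = ∑ i ∈ Finset.range n, ((x i).val, A (x i)) := by
          rw [Prod.ext_iff, Prod.fst_sum, Prod.snd_sum]
          exact ⟨rfl, rfl⟩
        rw [this]
        exact Submodule.sum_mem _ fun i _ => A.mem_graph (x i)
      have htend : Filter.Tendsto
          (fun n => (∑ i ∈ Finset.range n, (x i).val, ∑ i ∈ Finset.range n, A (x i)))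
          Filter.atTop (nhds (u, v)) :=
        (hsum1.hasSum.tendsto_sum_nat.prodMk_nhds hsum2.hasSum.tendsto_sum_nat)
      have := mem_closure_of_tendsto htend (Filter.Eventually.of_forall hpartial)
      rwa [hg.closure_eq] at this
    rw [mem_graph_iff] at hmemgraph
    obtain ⟨w, hw1, hw2⟩ := hmemgraph
    have hsumB : Summable fun n => B (x n).val :=
      hsum1.map (B : H →ₗ[ℂ] H).toAddMonoidHom B.continuous
    have hBu : B u = ∑' n, B (x n).val := B.map_tsum hsum1
    have hkey : v + B u = y := by
      rw [hBu, hv, Summable.tsum_eq_zero_add hsum2, hx0.1]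
      have hshift : (∑' n : ℕ, A (x (n + 1))) = ∑' n : ℕ, -(B (x n).val) := by
        congr 1
        funext n
        exact (hxs n).1
      rw [hshift, tsum_neg]
      abel
    refine ⟨w, ?_⟩
    exact (show A w + B (w : H) = y by rw [hw2, hw1]; exact hkey)

/-- The graph of the adjoint of a densely defined operator is closed. -/
theorem adjoint_graph_closed (T : H →ₗ.[ℂ] H) (hd : Dense (T.domain : Set H)) :
    IsClosed (T.adjoint.graph : Set (H × H)) := by
  have hset : (T.adjoint.graph : Set (H × H))
      = ⋂ v : T.domain, {p : H × H | ⟪p.2, (v : H)⟫ = ⟪p.1, T v⟫} := by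
    ext ⟨z, w⟩
    simp only [SetLike.mem_coe, mem_graph_iff, Set.mem_iInter, Set.mem_setOf_eq]
    constructor
    · rintro ⟨u, rfl, rfl⟩ v
      exact T.adjoint_isFormalAdjoint hd u v
    · intro hzw
      have hz : z ∈ T.adjoint.domain :=
        mem_adjoint_domain_of_exists z ⟨w, fun v => hzw v⟩
      refine ⟨⟨z, hz⟩, rfl, ?_⟩
      exact adjoint_apply_eq hd ⟨z, hz⟩ fun v => hzw v
  rw [hset]
  exact isClosed_iInter fun v =>
    isClosed_eq ((continuous_snd.inner continuous_const)) ((continuous_fst.inner continuous_const))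

/-- The adjoint of `T + S` (with `S` bounded) is `T* + S*`. -/
theorem adjoint_pmAddL (T : H →ₗ.[ℂ] H) (S : H →L[ℂ] H) (hd : Dense (T.domain : Set H)) :
    (pmAddL T S).adjoint = pmAddL T.adjoint (ContinuousLinearMap.adjoint S) := by
  have hd' : Dense ((pmAddL T S).domain : Set H) := hd
  have hdomeq : (pmAddL T S).adjoint.domain = T.adjoint.domain := by
    ext z
    rw [mem_adjoint_domain_iff, mem_adjoint_domain_iff]
    have hS : Continuous fun x : T.domain => (⟪z, S (x : H)⟫ : ℂ) :=
      ((innerSL ℂ z).comp (S.comp T.domain.subtypeL)).continuous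
    constructor
    · intro hc
      have hc' : Continuous fun x : T.domain => (⟪z, T x + S (x : H)⟫ : ℂ) := hc
      have : Continuous fun x : T.domain => (⟪z, T x + S (x : H)⟫ - ⟪z, S (x : H)⟫ : ℂ) :=
        hc'.sub hS
      have h' : Continuous fun x : T.domain => (⟪z, T x⟫ : ℂ) := by simpa [inner_add_right] using this
      exact h'
    · intro hc
      have hc' : Continuous fun x : T.domain => (⟪z, T x⟫ : ℂ) := hc
      have : Continuous fun x : T.domain => (⟪z, T x⟫ + ⟪z, S (x : H)⟫ : ℂ) := hc'.add hS
      have heq : (fun x : T.domain => (⟪z, T x + S (x : H)⟫ : ℂ))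
          = fun x : T.domain => (⟪z, T x⟫ + ⟪z, S (x : H)⟫ : ℂ) := by
        funext x; rw [inner_add_right]
      exact show Continuous fun x : T.domain => (⟪z, T x + S (x : H)⟫ : ℂ) from heq ▸ this
  refine LinearPMap.ext hdomeq ?_
  intro x hx hy
  have hx' : x ∈ T.adjoint.domain := hy
  have h1 : (pmAddL T S).adjoint ⟨x, hx⟩
      = T.adjoint ⟨x, hx'⟩ + ContinuousLinearMap.adjoint S x := by
    refine adjoint_apply_eq hd' ⟨x, hx⟩ ?_
    intro v
    rw [inner_add_left, show pmAddL T S v = T v + S (v : H) from rfl, inner_add_right]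
    congr 1
    · exact T.adjoint_isFormalAdjoint hd ⟨x, hx'⟩ v
    · exact ContinuousLinearMap.adjoint_inner_left S _ _
  exact h1

/-- Let `T` be a densely defined closed EP operator on a complex Hilbert space `H` and `S`
a bounded EP operator on `H` such that `‖Sx‖ ≤ a‖Tx‖` for all `x ∈ D(T)` and
`‖S*z‖ ≤ b‖T*z‖` for all `z ∈ D(T*)`, where `0 < a < 1` and `0 < b < 1`.  Then `T + S`
(defined on `D(T)`) is a closed operator which is EP: its range is closed and
`R(T + S) = R((T + S)*)`. -/
theorem stmt13 (T : H →ₗ.[ℂ] H) (S : H →L[ℂ] H) (a b : ℝ)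
    (ha0 : 0 < a) (ha1 : a < 1) (hb0 : 0 < b) (hb1 : b < 1)
    (hdense : Dense (T.domain : Set H))
    (hclosed : IsClosed (T.graph : Set (H × H)))
    (hTrange : IsClosed ((pmRange T : Submodule ℂ H) : Set H))
    (hTEP : pmRange T = pmRange T.adjoint)
    (hSrange : IsClosed ((LinearMap.range (S : H →ₗ[ℂ] H) : Submodule ℂ H) : Set H))
    (hSEP : LinearMap.range (S : H →ₗ[ℂ] H) = LinearMap.range ((ContinuousLinearMap.adjoint S : H →L[ℂ] H) : H →ₗ[ℂ] H))
    (hbound : ∀ x : T.domain, ‖S (x : H)‖ ≤ a * ‖T x‖)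
    (hboundAdj : ∀ z : T.adjoint.domain,
      ‖ContinuousLinearMap.adjoint S (z : H)‖ ≤ b * ‖T.adjoint z‖) :
    IsClosed ((pmAddL T S).graph : Set (H × H)) ∧
      IsClosed ((pmRange (pmAddL T S) : Submodule ℂ H) : Set H) ∧
      pmRange (pmAddL T S) = pmRange (pmAddL T S).adjoint := by
  -- `R(S) ⊆ R(T)` via orthogonality
  haveI : CompleteSpace (pmRange T) := hTrange.completeSpace_coe
  have hSsub : LinearMap.range (S : H →ₗ[ℂ] H) ≤ pmRange T := by
    have horth : (pmRange T)ᗮᗮ = pmRange T := Submodule.orthogonal_orthogonal _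
    rw [← horth]
    rintro w ⟨u, rfl⟩
    rw [Submodule.mem_orthogonal]
    intro z hz
    rw [Submodule.mem_orthogonal] at hz
    have hz0 : ∀ x : T.domain, (⟪(0 : H), (x : H)⟫ : ℂ) = ⟪z, T x⟫ := by
      intro x
      rw [inner_zero_left]
      have h0 := hz (T x) ⟨x, rfl⟩
      rw [← inner_conj_symm, h0]; exact (map_zero (starRingEnd ℂ)).symm
    have hzdom : z ∈ T.adjoint.domain := mem_adjoint_domain_of_exists z ⟨0, hz0⟩
    have hTz : T.adjoint ⟨z, hzdom⟩ = 0 := adjoint_apply_eq hdense _ hz0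
    have hSz : ContinuousLinearMap.adjoint S z = 0 := by
      have hb' := hboundAdj ⟨z, hzdom⟩
      rw [hTz, norm_zero, mul_zero] at hb'
      exact norm_le_zero_iff.1 hb'
    calc (⟪z, S u⟫ : ℂ) = ⟪ContinuousLinearMap.adjoint S z, u⟫ :=
          (ContinuousLinearMap.adjoint_inner_left S u z).symm
      _ = 0 := by rw [hSz, inner_zero_left]
  have h2 : pmRange (pmAddL T S) = pmRange T :=
    range_pmAddL T S ha0.le ha1 hclosed hTrange hbound hSsub
  have hadjr : IsClosed ((pmRange T.adjoint : Submodule ℂ H) : Set H) := hTEP ▸ hTrange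
  have hS'sub : LinearMap.range ((ContinuousLinearMap.adjoint S : H →L[ℂ] H) : H →ₗ[ℂ] H) ≤ pmRange T.adjoint := by
    rw [← hSEP, ← hTEP]
    exact hSsub
  have h4 : pmRange (pmAddL T.adjoint (ContinuousLinearMap.adjoint S)) = pmRange T.adjoint :=
    range_pmAddL T.adjoint (ContinuousLinearMap.adjoint S) hb0.le hb1
      (adjoint_graph_closed T hdense) hadjr hboundAdj hS'sub
  refine ⟨pmAddL_graph_closed T S hclosed, ?_, ?_⟩
  · rw [h2]
    exact hTrange
  · rw [h2, adjoint_pmAddL T S hdense, h4]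
    exact hTEP
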